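/- For every real a > 1 there exists a constant C > 0 such that for all x ∈ [0,1): 0 ≤ F(a,a;2a;x) − 1 ≤ C·x·(1 + |log(1−x)|). -/

import Mathlib

open Real Set

/-- The Gauss hypergeometric function `F(a,b;c;x) = Σₖ (a)ₖ(b)ₖ/((c)ₖ k!) xᵏ`. -/
noncomputable def hyp (a b c x : ℝ) : ℝ :=
  ∑' k : ℕ, ((ascPochhammer ℝ k).eval a * (ascPochhammer ℝ k).eval b /
    ((ascPochhammer ℝ k).eval c * (Nat.factorial k : ℝ))) * x ^ k

lemma gamma_poch (x : ℝ) (hx : 0 < x) (k : ℕ) :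
    Real.Gamma (x + k) = (ascPochhammer ℝ k).eval x * Real.Gamma x := by
  induction k with
  | zero => simp
  | succ n ih =>
    have hxn : (0:ℝ) < x + n := by positivity
    have : Real.Gamma (x + (n+1)) = (x + n) * Real.Gamma (x + n) := by
      rw [show x + ((n:ℝ)+1) = (x + n) + 1 by ring, Real.Gamma_add_one hxn.ne']
    rw [Nat.cast_add, Nat.cast_one, this, ih, ascPochhammer_succ_eval]
    ring

/-- By log-convexity of Gamma, `Γ(a+k)² ≤ Γ(k)Γ(2a+k)`. -/
lemma gamma_sq_le (a : ℝ) (ha : 0 < a) (k : ℕ) (hk : 1 ≤ k) :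
    Real.Gamma (a + k) ^ 2 ≤ Real.Gamma k * Real.Gamma (2 * a + k) := by
  have hk0 : (0:ℝ) < k := by exact_mod_cast hk
  have h2 : (0:ℝ) < 2 * a + k := by positivity
  have hmid : (1/2 : ℝ) • (k:ℝ) + (1/2 : ℝ) • (2*a + k) = a + k := by
    simp only [smul_eq_mul]; ring
  have hcv := convexOn_log_Gamma.2 (mem_Ioi.2 hk0) (mem_Ioi.2 h2)
    (by norm_num : (0:ℝ) ≤ 1/2) (by norm_num : (0:ℝ) ≤ 1/2) (by norm_num)
  rw [hmid] at hcv
  simp only [Function.comp_apply, smul_eq_mul] at hcv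
  have hak : (0:ℝ) < a + k := by positivity
  have hGak := Real.Gamma_pos_of_pos hak
  have hGk := Real.Gamma_pos_of_pos hk0
  have hG2 := Real.Gamma_pos_of_pos h2
  have hlog : Real.log (Real.Gamma (a+k) ^ 2) ≤
      Real.log (Real.Gamma k * Real.Gamma (2*a + k)) := by
    rw [Real.log_pow, Real.log_mul hGk.ne' hG2.ne']
    push_cast
    linarith
  calc Real.Gamma (a+k) ^ 2 = Real.exp (Real.log (Real.Gamma (a+k) ^ 2)) :=
        (Real.exp_log (by positivity)).symm
    _ ≤ Real.exp (Real.log (Real.Gamma k * Real.Gamma (2*a + k))) :=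
        Real.exp_le_exp.2 hlog
    _ = Real.Gamma k * Real.Gamma (2*a + k) := Real.exp_log (by positivity)

/-- The coefficient bound: for `k ≥ 1`, `(a)ₖ²/((2a)ₖ k!) ≤ (Γ(2a)/Γ(a)²)/k`. -/
lemma coeff_le (a : ℝ) (ha : 1 < a) (k : ℕ) (hk : 1 ≤ k) :
    (ascPochhammer ℝ k).eval a * (ascPochhammer ℝ k).eval a /
      ((ascPochhammer ℝ k).eval (2 * a) * (Nat.factorial k : ℝ)) ≤
    (Real.Gamma (2 * a) / Real.Gamma a ^ 2) / k := by
  have ha0 : (0:ℝ) < a := by linarith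
  have h2a : (0:ℝ) < 2 * a := by linarith
  have hk0 : (0:ℝ) < k := by exact_mod_cast hk
  have hGa := Real.Gamma_pos_of_pos ha0
  have hG2a := Real.Gamma_pos_of_pos h2a
  have hGak := Real.Gamma_pos_of_pos (show (0:ℝ) < a + k by positivity)
  have hG2ak := Real.Gamma_pos_of_pos (show (0:ℝ) < 2 * a + k by positivity)
  have hGk := Real.Gamma_pos_of_pos hk0
  have hA : (ascPochhammer ℝ k).eval a = Real.Gamma (a + k) / Real.Gamma a := by
    rw [gamma_poch a ha0 k]; field_simp
  have hB : (ascPochhammer ℝ k).eval (2*a) = Real.Gamma (2*a + k) / Real.Gamma (2*a) := by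
    rw [gamma_poch (2*a) h2a k]; field_simp
  have hfac : (Nat.factorial k : ℝ) = k * Real.Gamma k := by
    obtain ⟨m, rfl⟩ := Nat.exists_eq_succ_of_ne_zero (show k ≠ 0 by omega)
    rw [show ((m+1:ℕ):ℝ) = (m:ℝ) + 1 by push_cast; ring, Real.Gamma_nat_eq_factorial]
    push_cast [Nat.factorial_succ]; ring
  have hkey := gamma_sq_le a ha0 k hk
  rw [hA, hB, hfac]
  have hLHS : Real.Gamma (a+k) / Real.Gamma a * (Real.Gamma (a+k) / Real.Gamma a) /
      (Real.Gamma (2*a + k) / Real.Gamma (2*a) * (↑k * Real.Gamma k)) =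
      Real.Gamma (a+k)^2 * Real.Gamma (2*a) /
      (Real.Gamma a ^ 2 * Real.Gamma (2*a + k) * k * Real.Gamma k) := by
    field_simp
  have hRHS : Real.Gamma (2*a) / Real.Gamma a ^ 2 / (k:ℝ) =
      Real.Gamma (2*a) / (Real.Gamma a ^ 2 * k) := by
    field_simp
  rw [hLHS, hRHS, div_le_div_iff₀ (by positivity) (by positivity)]
  nlinarith [mul_le_mul_of_nonneg_right hkey
    (show (0:ℝ) ≤ Real.Gamma (2*a) * Real.Gamma a ^ 2 * k by positivity), hGa, hG2a, hGak, hG2ak, hGk, hk0]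

set_option maxHeartbeats 1000000 in
/-- For every `a > 1` there exists `C > 0` such that for all `x ∈ [0,1)`:
`0 ≤ F(a,a;2a;x) − 1 ≤ C x (1 + |log(1−x)|)`. -/
theorem stmt3 (a : ℝ) (ha : 1 < a) :
    ∃ C > 0, ∀ x ∈ Set.Ico (0:ℝ) 1,
      0 ≤ hyp a a (2 * a) x - 1 ∧
      hyp a a (2 * a) x - 1 ≤ C * x * (1 + |Real.log (1 - x)|) := by
  have ha0 : (0:ℝ) < a := by linarith
  set M : ℝ := Real.Gamma (2 * a) / Real.Gamma a ^ 2 with hM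
  have hGa := Real.Gamma_pos_of_pos ha0
  have hG2a := Real.Gamma_pos_of_pos (show (0:ℝ) < 2*a by linarith)
  have hMpos : 0 < M := by positivity
  refine ⟨2 * M, by positivity, fun x hx => ?_⟩
  obtain ⟨hx0, hx1⟩ := hx
  set f : ℕ → ℝ := fun k => ((ascPochhammer ℝ k).eval a * (ascPochhammer ℝ k).eval a /
    ((ascPochhammer ℝ k).eval (2 * a) * (Nat.factorial k : ℝ))) * x ^ k with hf
  have hfnonneg : ∀ k, 0 ≤ f k := by
    intro k
    have h1 := ascPochhammer_pos k a ha0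
    have h2 := ascPochhammer_pos k (2*a) (by linarith)
    have h3 : (0:ℝ) < Nat.factorial k := by exact_mod_cast Nat.factorial_pos k
    positivity
  have hcoef : ∀ k : ℕ, 1 ≤ k → (ascPochhammer ℝ k).eval a * (ascPochhammer ℝ k).eval a /
      ((ascPochhammer ℝ k).eval (2 * a) * (Nat.factorial k : ℝ)) ≤ M / k :=
    fun k hk => coeff_le a ha k hk
  -- summability of f
  have hgeom : Summable (fun k : ℕ => (max 1 M) * x ^ k) :=
    (summable_geometric_of_lt_one hx0 hx1).mul_left _
  have hfle : ∀ k, f k ≤ (max 1 M) * x ^ k := by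
    intro k
    apply mul_le_mul_of_nonneg_right _ (pow_nonneg hx0 k)
    rcases Nat.eq_zero_or_pos k with rfl | hk
    · simp [le_max_left]
    · refine le_trans (hcoef k hk) (le_trans ?_ (le_max_right 1 M))
      rw [div_le_iff₀ (show (0:ℝ) < k by exact_mod_cast hk)]
      nlinarith [hMpos, show (1:ℝ) ≤ (k:ℝ) by exact_mod_cast hk]
  have hsum : Summable f := Summable.of_nonneg_of_le hfnonneg hfle hgeom
  have hf0 : f 0 = 1 := by simp [hf]
  -- the comparison series
  have hlogsum : HasSum (fun k : ℕ => M * (x ^ (k+1) / (k+1)))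
      (M * (-Real.log (1 - x))) :=
    (hasSum_pow_div_log_of_abs_lt_one (by rwa [abs_of_nonneg hx0])).mul_left M
  have htail : hyp a a (2 * a) x - 1 = ∑' k : ℕ, f (k + 1) := by
    have : hyp a a (2 * a) x = ∑' k, f k := rfl
    rw [this, hsum.tsum_eq_zero_add, hf0]
    ring
  constructor
  · rw [htail]
    exact tsum_nonneg fun k => hfnonneg (k+1)
  · rw [htail]
    have hsum1 : Summable (fun k : ℕ => f (k + 1)) := (summable_nat_add_iff 1).2 hsum
    have hterm : ∀ k : ℕ, f (k + 1) ≤ M * (x ^ (k+1) / ((k:ℝ)+1)) := by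
      intro k
      have hk1 : 1 ≤ k + 1 := Nat.succ_le_succ (Nat.zero_le k)
      have h1 := hcoef (k+1) hk1
      have h2 : ((k+1 : ℕ) : ℝ) = (k:ℝ) + 1 := by push_cast; ring
      rw [h2] at h1
      have h3 : f (k+1) ≤ (M / ((k:ℝ)+1)) * x ^ (k+1) :=
        mul_le_mul_of_nonneg_right h1 (pow_nonneg hx0 _)
      calc f (k+1) ≤ (M / ((k:ℝ)+1)) * x ^ (k+1) := h3
        _ = M * (x ^ (k+1) / ((k:ℝ)+1)) := by ring
    have hle : ∑' k : ℕ, f (k + 1) ≤ M * (-Real.log (1 - x)) := by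
      rw [← hlogsum.tsum_eq]
      exact Summable.tsum_le_tsum hterm hsum1 hlogsum.summable
    refine hle.trans ?_
    -- now: M * (-log(1-x)) ≤ 2M x (1 + |log(1-x)|)
    have h1x : (0:ℝ) < 1 - x := by linarith
    have hlogle : Real.log (1 - x) ≤ 0 := Real.log_nonpos (by linarith) (by linarith)
    rw [abs_of_nonpos hlogle]
    set L : ℝ := -Real.log (1 - x) with hL
    have hLnn : 0 ≤ L := by simp [hL]; linarith
    rcases le_or_gt x (1/2) with hhalf | hhalf
    · -- L ≤ x/(1-x) ≤ 2x
      have hbound : L ≤ x / (1 - x) := by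
        have h := Real.log_le_sub_one_of_pos (show (0:ℝ) < (1-x)⁻¹ by positivity)
        rw [Real.log_inv] at h
        have : (1-x)⁻¹ - 1 = x / (1-x) := by field_simp; ring
        linarith [this ▸ h]
      have : x / (1 - x) ≤ 2 * x := by
        rw [div_le_iff₀ h1x]; nlinarith
      nlinarith [mul_le_mul_of_nonneg_left (show L ≤ 2*x by linarith) hMpos.le,
        mul_nonneg (mul_nonneg (mul_nonneg (by norm_num : (0:ℝ) ≤ 2) hMpos.le) hx0) hLnn]
    · -- 2x ≥ 1, so M L ≤ 2 M x L ≤ 2 M x (1 + L)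
      nlinarith [mul_nonneg (mul_nonneg hMpos.le hLnn) (show (0:ℝ) ≤ 2*x - 1 by linarith),
        mul_nonneg hMpos.le hx0]
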